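/- Let k and r be positive integers with r | k and k ≥ 2r, and let χ: [1, rk-2r+1] → {0,1} satisfy χ(1) = 0, χ(r-1) = 1, and χ(k-2) = 1. Then there exist x₁,...,x_k in [1, rk-2r+1] with x₁ + ⋯ + x_{k-1} = x_k and ∑_{i=1}^k χ(x_i) ≡ 0 (mod r). -/

import Mathlib

lemma sum_three_piece (n m1 m2 A B C : ℕ) (h1 : m1 ≤ m2) (h2 : m2 ≤ n) :
    (∑ j ∈ Finset.range n, (if j < m1 then A else if j < m2 then B else C))
      = m1 * A + (m2 - m1) * B + (n - m2) * C := by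
  rw [Finset.range_eq_Ico, ← Finset.sum_Ico_consecutive _ (Nat.zero_le m1) (h1.trans h2),
      ← Finset.sum_Ico_consecutive _ h1 h2]
  have e1 : (∑ j ∈ Finset.Ico 0 m1, (if j < m1 then A else if j < m2 then B else C))
      = m1 * A := by
    rw [Finset.sum_congr rfl (fun x hx => ?_), Finset.sum_const, Nat.card_Ico,
      smul_eq_mul, Nat.sub_zero]
    simp only [Finset.mem_Ico] at hx
    simp [hx.2]
  have e2 : (∑ j ∈ Finset.Ico m1 m2, (if j < m1 then A else if j < m2 then B else C))
      = (m2 - m1) * B := by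
    rw [Finset.sum_congr rfl (fun x hx => ?_), Finset.sum_const, Nat.card_Ico,
      smul_eq_mul]
    simp only [Finset.mem_Ico] at hx
    have : ¬ x < m1 := by omega
    simp [this, hx.2]
  have e3 : (∑ j ∈ Finset.Ico m2 n, (if j < m1 then A else if j < m2 then B else C))
      = (n - m2) * C := by
    rw [Finset.sum_congr rfl (fun x hx => ?_), Finset.sum_const, Nat.card_Ico,
      smul_eq_mul]
    simp only [Finset.mem_Ico] at hx
    have h1' : ¬ x < m1 := by omega
    have h2' : ¬ x < m2 := by omega
    simp [h1', h2']
  rw [e1, e2, e3]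
  ring

theorem stmt4 (k r : ℕ) (hr : 0 < r) (hdvd : r ∣ k) (hkr : 2 * r ≤ k)
    (χ : ℕ → ℕ) (hχ : ∀ n ∈ Finset.Icc 1 (r * k - 2 * r + 1), χ n ≤ 1)
    (h1 : χ 1 = 0) (h2 : χ (r - 1) = 1) (h3 : χ (k - 2) = 1) :
    ∃ (y : Fin (k - 1) → ℕ) (z : ℕ),
      (∀ i, y i ∈ Finset.Icc 1 (r * k - 2 * r + 1)) ∧ z ∈ Finset.Icc 1 (r * k - 2 * r + 1) ∧
      (∑ i, y i) = z ∧ ((∑ i, χ (y i)) + χ z) % r = 0 := by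
  rcases eq_or_lt_of_le (show 1 ≤ r from hr) with hr1 | hr2
  · -- r = 1
    have hre : r = 1 := hr1.symm
    subst hre
    refine ⟨fun _ => 1, k - 1, ?_, ?_, ?_, ?_⟩
    · intro i; simp only [Finset.mem_Icc]; omega
    · simp [Finset.mem_Icc]; omega
    · simp [Finset.sum_const]
    · simp [Nat.mod_one]
  · -- r ≥ 2
    have hk4 : 4 ≤ k := by omega
    set N := r * k - 2 * r + 1 with hN
    have hz1 : r * (k - 2) = r * k - 2 * r := by
      rw [Nat.mul_sub, Nat.mul_comm r 2]
    have hzk : k - 2 ≤ r * (k - 2) := Nat.le_mul_of_pos_left _ hr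
    have hzr : r ≤ r * (k - 2) := Nat.le_mul_of_pos_right _ (by omega)
    have hzN : r * (k - 2) + 1 = N := by omega
    set z := r * (k - 2) with hzdef
    have hzmem : z ∈ Finset.Icc 1 N := by simp [Finset.mem_Icc]; omega
    have hmem1 : (1 : ℕ) ∈ Finset.Icc 1 N := by simp [Finset.mem_Icc]; omega
    have hmemr : r - 1 ∈ Finset.Icc 1 N := by simp [Finset.mem_Icc]; omega
    have hmemk : k - 2 ∈ Finset.Icc 1 N := by simp [Finset.mem_Icc]; omega
    have hkmod : k % r = 0 := by
      obtain ⟨m, rfl⟩ := hdvd; exact Nat.mul_mod_right r m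
    rcases Nat.le_one_iff_eq_zero_or_eq_one.mp (hχ z hzmem) with hz0 | hz1
    · -- χ z = 0 : r-1 copies of k-2, one r-1, rest 1
      refine ⟨fun i => if i.val < r - 1 then k - 2 else if i.val < r then r - 1 else 1,
        z, ?_, hzmem, ?_, ?_⟩
      · intro i; dsimp only; split_ifs <;> assumption
      · rw [Fin.sum_univ_eq_sum_range (fun j => if j < r - 1 then k - 2 else if j < r then r - 1 else 1),
          sum_three_piece _ _ _ _ _ _ (by omega) (by omega)]
        have : (r - 1) * (k - 2) + (r - (r - 1)) * (r - 1) + (k - 1 - r) * 1 = r * (k - 2) := by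
          zify [show 1 ≤ r by omega, show 2 ≤ k by omega, show r - 1 ≤ r by omega,
            show 1 ≤ k by omega, show r ≤ k - 1 by omega]
          ring
        omega
      · have hsum : (∑ i : Fin (k-1), χ (if i.val < r - 1 then k - 2 else if i.val < r then r - 1 else 1)) = r := by
          have : ∀ i : Fin (k-1), χ (if i.val < r - 1 then k - 2 else if i.val < r then r - 1 else 1)
              = if i.val < r - 1 then 1 else if i.val < r then 1 else 0 := by
            intro i; split_ifs <;> assumption
          rw [Finset.sum_congr rfl (fun i _ => this i),
            Fin.sum_univ_eq_sum_range (fun j => if j < r - 1 then 1 else if j < r then 1 else 0),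
            sum_three_piece _ _ _ _ _ _ (by omega) (by omega)]
          omega
        rw [hsum, hz0, Nat.add_zero, Nat.mod_self]
    · -- χ z = 1 : one k-2, k-2 copies of r-1
      refine ⟨fun i => if i.val < 1 then k - 2 else if i.val < k - 1 then r - 1 else 1,
        z, ?_, hzmem, ?_, ?_⟩
      · intro i; dsimp only; split_ifs <;> assumption
      · rw [Fin.sum_univ_eq_sum_range (fun j => if j < 1 then k - 2 else if j < k - 1 then r - 1 else 1),
          sum_three_piece _ _ _ _ _ _ (by omega) (by omega)]
        have : 1 * (k - 2) + (k - 1 - 1) * (r - 1) + (k - 1 - (k - 1)) * 1 = r * (k - 2) := by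
          zify [show 1 ≤ r by omega, show 2 ≤ k by omega, show 1 ≤ k by omega,
            show 1 ≤ k - 1 by omega, show k - 1 ≤ k - 1 from le_refl _]
          ring
        omega
      · have hsum : (∑ i : Fin (k-1), χ (if i.val < 1 then k - 2 else if i.val < k - 1 then r - 1 else 1)) = k - 1 := by
          have : ∀ i : Fin (k-1), χ (if i.val < 1 then k - 2 else if i.val < k - 1 then r - 1 else 1)
              = if i.val < 1 then 1 else if i.val < k - 1 then 1 else 0 := by
            intro i; split_ifs <;> assumption
          rw [Finset.sum_congr rfl (fun i _ => this i),
            Fin.sum_univ_eq_sum_range (fun j => if j < 1 then 1 else if j < k - 1 then 1 else 0),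
            sum_three_piece _ _ _ _ _ _ (by omega) (by omega)]
          omega
        rw [hsum, hz1]
        have : k - 1 + 1 = k := by omega
        rw [this, hkmod]
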